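/- Let n, m be integers with 1 ≤ m ≤ n − 2 and suppose m is not a perfect power, i.e., there are no natural numbers a and i with i ≥ 2 and m = a^i. Then for every integer q ≥ 1 the polynomial P(x^q) = x^{2q} − n·x^q + m is irreducible in ℤ[x]. -/

import Mathlib

open Polynomial IntermediateField

set_option linter.unnecessarySeqFocus false
set_option maxHeartbeats 1000000
set_option synthInstance.maxHeartbeats 400000

private lemma natAbs_pow_of_pow_eq {t : ℤ} {p : ℕ} {m : ℤ} (hm : 1 ≤ m) (h : t ^ p = m) :
    m = (t.natAbs : ℤ) ^ p := by
  have h1 : ((t.natAbs : ℤ)) ^ p = |t| ^ p := by rw [Int.abs_eq_natAbs]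
  rw [h1, ← abs_pow, h, abs_of_nonneg (by omega)]

private lemma gq_monic {R : Type*} [CommRing R] [Nontrivial R] (a b : R) (q : ℕ) (hq : 1 ≤ q) :
    (X ^ (2 * q) - C a * X ^ q + C b : R[X]).Monic := by
  have h1 : ¬ (2 * q ≤ q) := by omega
  have h2 : q ≠ 0 := by omega
  monicity! <;> simp [h1, h2] <;> omega

private lemma gq_natDegree (a b : ℚ) (q : ℕ) (hq : 1 ≤ q) :
    (X ^ (2 * q) - C a * X ^ q + C b : ℚ[X]).natDegree = 2 * q := by
  have h1 : ¬ (2 * q = q) := by omega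
  have h2 : q ≠ 0 := by omega
  compute_degree! <;> first | omega | simp [h1, h2]

private lemma gq_coeff_zero (a b : ℚ) (q : ℕ) (hq : 1 ≤ q) :
    (X ^ (2 * q) - C a * X ^ q + C b : ℚ[X]).coeff 0 = b := by
  have h1 : 2 * q ≠ 0 := by omega
  have h2 : q ≠ 0 := by omega
  simp [coeff_X_pow, h1, h2]
  intro h
  exact absurd h.symm h2

private lemma aeval_gq_rat {b β : ℝ} {q : ℕ} (n m : ℤ) (hb : b ^ q = β)
    (h : β ^ 2 - n * β + m = 0) :
    aeval b (X ^ (2 * q) - C (n : ℚ) * X ^ q + C (m : ℚ) : ℚ[X]) = 0 := by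
  have h2 : b ^ (2 * q) = β ^ 2 := by rw [mul_comm, pow_mul, hb]
  simp only [map_add, map_sub, map_mul, map_pow, aeval_X, aeval_C, map_intCast, map_ratCast,
    Rat.cast_intCast]
  rw [h2, hb]
  linarith

private lemma isIntegral_int {b β : ℝ} {q : ℕ} (n m : ℤ) (hq : 1 ≤ q) (hb : b ^ q = β)
    (h : β ^ 2 - n * β + m = 0) : IsIntegral ℤ b := by
  refine ⟨X ^ (2 * q) - C n * X ^ q + C m, gq_monic n m q hq, ?_⟩
  rw [← aeval_def]
  have h2 : b ^ (2 * q) = β ^ 2 := by rw [mul_comm, pow_mul, hb]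
  simp only [map_add, map_sub, map_mul, map_pow, aeval_X, aeval_C, algebraMap_int_eq, eq_intCast, map_intCast]
  rw [h2, hb]
  linarith

private lemma minpoly_eq_aux (n m : ℤ) (hm : 1 ≤ m) (hn : m ≤ n - 2)
    (hpow : ¬ ∃ (a i : ℕ), 2 ≤ i ∧ m = (a : ℤ) ^ i) :
    ∀ q : ℕ, 1 ≤ q →
      minpoly ℚ ((((n : ℝ) + Real.sqrt ((n : ℝ) ^ 2 - 4 * m)) / 2) ^ ((q : ℝ)⁻¹ : ℝ))
        = X ^ (2 * q) - C (n : ℚ) * X ^ q + C (m : ℚ) := by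
  -- basic facts about β
  set d : ℝ := (n : ℝ) ^ 2 - 4 * m with hd
  set s : ℝ := Real.sqrt d with hs
  have hnR : (3 : ℝ) ≤ (n : ℝ) := by exact_mod_cast (by omega : (3:ℤ) ≤ n)
  have hmR : (1 : ℝ) ≤ (m : ℝ) := by exact_mod_cast hm
  have hmnR : (m : ℝ) ≤ (n : ℝ) - 2 := by exact_mod_cast hn
  have hdpos : 0 < d := by nlinarith
  have hs2 : s ^ 2 = d := Real.sq_sqrt hdpos.le
  have hs0 : 0 ≤ s := Real.sqrt_nonneg d
  have hslt : s < n := by nlinarith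
  have hsgt : (n : ℝ) - 2 < s := by nlinarith
  set β : ℝ := ((n : ℝ) + s) / 2 with hβ
  have hβgt : 1 < β := by rw [hβ]; nlinarith
  have hβpos : 0 < β := by linarith
  have hβeq : β ^ 2 - n * β + m = 0 := by rw [hβ]; nlinarith
  -- beta is not rational
  have hβirr : β ∉ (algebraMap ℚ ℝ).range := by
    rintro ⟨c, hc⟩
    have hint : IsIntegral ℤ β := isIntegral_int n m le_rfl (pow_one β) hβeq
    rw [← hc] at hint
    rw [isIntegral_algebraMap_iff (algebraMap ℚ ℝ).injective] at hint
    obtain ⟨t, ht⟩ := IsIntegrallyClosed.isIntegral_iff.mp hint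
    have hβt : β = (t : ℝ) := by
      rw [← hc, ← ht]; norm_num
    have hβub : β < (n : ℝ) := by rw [hβ]; linarith
    have hβlb : (n : ℝ) - 1 < β := by rw [hβ]; linarith
    have h1 : (0 : ℝ) < ((n - t : ℤ) : ℝ) := by push_cast; rw [hβt] at hβub; linarith
    have h2 : (((n - t : ℤ)) : ℝ) < 1 := by push_cast; rw [hβt] at hβlb; linarith
    have h1' : (0 : ℤ) < n - t := by exact_mod_cast h1
    have h2' : (n - t : ℤ) < 1 := by exact_mod_cast h2
    omega
  -- the induction
  intro q
  induction q using induction_on_primes with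
  | zero => intro h; omega
  | one =>
    intro _
    have hb1 : β ^ (((1:ℕ) : ℝ)⁻¹ : ℝ) = β := by norm_num
    rw [hb1]
    have hint : IsIntegral ℚ β := ⟨_, gq_monic (n:ℚ) (m:ℚ) 1 le_rfl, by
      rw [← aeval_def]; exact aeval_gq_rat n m (pow_one β) hβeq⟩
    have hdvd : minpoly ℚ β ∣ X ^ (2 * 1) - C (n : ℚ) * X ^ 1 + C (m : ℚ) :=
      minpoly.dvd ℚ β (aeval_gq_rat n m (pow_one β) hβeq)
    have hne : (X ^ (2 * 1) - C (n : ℚ) * X ^ 1 + C (m : ℚ) : ℚ[X]) ≠ 0 :=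
      (gq_monic _ _ 1 le_rfl).ne_zero
    have hge : 2 ≤ (minpoly ℚ β).natDegree := (minpoly.two_le_natDegree_iff hint).mpr hβirr
    have hassoc := associated_of_dvd_of_natDegree_le hdvd hne
      (by rw [gq_natDegree _ _ 1 le_rfl]; omega)
    exact eq_of_monic_of_associated (minpoly.monic hint) (gq_monic _ _ 1 le_rfl) hassoc
  | prime_mul p r hp IH =>
    intro hq
    have hr1 : 1 ≤ r := by
      rcases Nat.eq_zero_or_pos r with h | h
      · subst h; simp at hq
      · exact h
    have hIH := IH hr1
    have hp0 : p ≠ 0 := hp.ne_zero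
    have hpr0 : ((p * r : ℕ)) ≠ 0 := by positivity
    set br : ℝ := β ^ (((r : ℕ) : ℝ)⁻¹ : ℝ) with hbr_def
    set bq : ℝ := β ^ (((p * r : ℕ) : ℝ)⁻¹ : ℝ) with hbq_def
    have hbrr : br ^ r = β := Real.rpow_inv_natCast_pow hβpos.le (by omega)
    have hbq2 : bq ^ (p * r) = β := Real.rpow_inv_natCast_pow hβpos.le hpr0
    have harith : (((p * r : ℕ) : ℝ))⁻¹ * ((p : ℕ) : ℝ) = (((r : ℕ) : ℝ))⁻¹ := by
      have h1 : ((p : ℕ) : ℝ) ≠ 0 := Nat.cast_ne_zero.mpr hp0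
      have h2 : ((r : ℕ) : ℝ) ≠ 0 := Nat.cast_ne_zero.mpr (by omega)
      field_simp
      push_cast; ring
    have hbqp : bq ^ p = br := by
      rw [hbq_def, hbr_def, ← Real.rpow_natCast (β ^ _) p, ← Real.rpow_mul hβpos.le, harith]
    -- integrality of br
    have hint_br_Q : IsIntegral ℚ br := ⟨_, gq_monic (n : ℚ) (m : ℚ) r hr1, by
      rw [← aeval_def]; exact aeval_gq_rat n m hbrr hβeq⟩
    have hint_br_Z : IsIntegral ℤ br := isIntegral_int n m hr1 hbrr hβeq
    haveI : FiniteDimensional ℚ ℚ⟮br⟯ := adjoin.finiteDimensional hint_br_Q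
    -- norm of the generator is m
    have hnormgen : Algebra.norm ℚ (AdjoinSimple.gen ℚ br) = (m : ℚ) := by
      have h1 := Algebra.PowerBasis.norm_gen_eq_coeff_zero_minpoly (adjoin.powerBasis hint_br_Q)
      rw [adjoin.powerBasis_gen, adjoin.powerBasis_dim, minpoly_gen, hIH,
        gq_coeff_zero _ _ r hr1, gq_natDegree _ _ r hr1] at h1
      refine h1.trans ?_; rw [pow_mul]
      norm_num
    -- the Kummer polynomial is irreducible
    have hirr : Irreducible (X ^ p - C (AdjoinSimple.gen ℚ br) : ℚ⟮br⟯[X]) := by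
      apply X_pow_sub_C_irreducible_of_prime hp
      intro γ hγ
      have hgen_int : IsIntegral ℤ (AdjoinSimple.gen ℚ br) := by
        rw [← isIntegral_algebraMap_iff (algebraMap ℚ⟮br⟯ ℝ).injective,
          AdjoinSimple.algebraMap_gen]
        exact hint_br_Z
      have hγp_int : IsIntegral ℤ (γ ^ p) := hγ ▸ hgen_int
      have hγ_int : IsIntegral ℤ γ := hγp_int.of_pow hp.pos
      have hnγ_int : IsIntegral ℤ (Algebra.norm ℚ γ) := Algebra.isIntegral_norm ℚ hγ_int
      obtain ⟨t, ht⟩ := IsIntegrallyClosed.isIntegral_iff.mp hnγ_int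
      have htp : (t : ℚ) ^ p = (m : ℚ) := by
        have : ((algebraMap ℤ ℚ t) : ℚ) ^ p = (m : ℚ) := by
          rw [ht, ← map_pow, hγ, hnormgen]
        simpa using this
      have htm : t ^ p = m := by exact_mod_cast htp
      exact hpow ⟨t.natAbs, p, hp.two_le, natAbs_pow_of_pow_eq hm htm⟩
    -- minimal polynomial of bq over ℚ⟮br⟯
    have hminF : minpoly ℚ⟮br⟯ bq = X ^ p - C (AdjoinSimple.gen ℚ br) := by
      refine (minpoly.eq_of_irreducible_of_monic hirr ?_ (monic_X_pow_sub_C _ hp0)).symm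
      simp [AdjoinSimple.algebraMap_gen, hbqp]
    -- degree computations
    have hbq_int_Q : IsIntegral ℚ bq := ⟨_, gq_monic (n : ℚ) (m : ℚ) (p * r) hq, by
      rw [← aeval_def]; exact aeval_gq_rat n m hbq2 hβeq⟩
    have hbq_int_F : IsIntegral ℚ⟮br⟯ bq := hbq_int_Q.tower_top
    have hfr1 : Module.finrank ℚ ℚ⟮br⟯ = 2 * r := by
      rw [adjoin.finrank hint_br_Q, hIH, gq_natDegree _ _ r hr1]
    haveI : FiniteDimensional ℚ⟮br⟯ ℚ⟮br⟯⟮bq⟯ := adjoin.finiteDimensional hbq_int_F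
    have hfr2 : Module.finrank ℚ⟮br⟯ ℚ⟮br⟯⟮bq⟯ = p := by
      rw [adjoin.finrank hbq_int_F, hminF, natDegree_X_pow_sub_C]
    have hadj : (ℚ⟮br⟯⟮bq⟯).restrictScalars ℚ = ℚ⟮bq⟯ := by
      refine Eq.trans (adjoin_simple_adjoin_simple ..) ?_
      apply le_antisymm
      · rw [adjoin_le_iff]
        intro x hx
        simp only [Set.mem_insert_iff, Set.mem_singleton_iff] at hx
        rcases hx with rfl | rfl
        · exact hbqp ▸ pow_mem (mem_adjoin_simple_self ℚ bq) p
        · exact mem_adjoin_simple_self ℚ bq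
      · exact adjoin.mono ℚ _ _ (by simp)
    have hfr3 : Module.finrank ℚ ℚ⟮bq⟯ = 2 * (p * r) := by
      rw [← hadj]
      have h1 : Module.finrank ℚ ℚ⟮br⟯ * Module.finrank ℚ⟮br⟯ ℚ⟮br⟯⟮bq⟯
          = Module.finrank ℚ ℚ⟮br⟯⟮bq⟯ := Module.finrank_mul_finrank ℚ ℚ⟮br⟯ ℚ⟮br⟯⟮bq⟯
      have h2 : Module.finrank ℚ ((ℚ⟮br⟯⟮bq⟯).restrictScalars ℚ) = Module.finrank ℚ ℚ⟮br⟯⟮bq⟯ := rfl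
      rw [h2, ← h1, hfr1, hfr2]
      ring
    have hdeg : (minpoly ℚ bq).natDegree = 2 * (p * r) := by
      rw [← adjoin.finrank hbq_int_Q, hfr3]
    have hdvd := minpoly.dvd ℚ bq (aeval_gq_rat n m hbq2 hβeq)
    exact eq_of_monic_of_associated (minpoly.monic hbq_int_Q) (gq_monic _ _ _ hq)
      (associated_of_dvd_of_natDegree_le hdvd (gq_monic _ _ _ hq).ne_zero
        (by rw [gq_natDegree _ _ _ hq, hdeg]))

/-- **Proposition 4.** If `1 ≤ m ≤ n - 2` and `m` is not a perfect power,
then `P(x^q) = x^(2q) - n x^q + m` is irreducible in `ℤ[x]` for every `q ≥ 1`. -/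
theorem irreducible_of_not_perfectPower
    (n m : ℤ) (hm : 1 ≤ m) (hn : m ≤ n - 2)
    (hpow : ¬ ∃ (a i : ℕ), 2 ≤ i ∧ m = (a : ℤ) ^ i) :
    ∀ q : ℕ, 1 ≤ q → Irreducible (X ^ (2 * q) - C n * X ^ q + C m) := by
  intro q hq
  set d : ℝ := (n : ℝ) ^ 2 - 4 * m with hd
  set s : ℝ := Real.sqrt d with hs
  have hnR : (3 : ℝ) ≤ (n : ℝ) := by exact_mod_cast (by omega : (3:ℤ) ≤ n)
  have hmR : (1 : ℝ) ≤ (m : ℝ) := by exact_mod_cast hm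
  have hmnR : (m : ℝ) ≤ (n : ℝ) - 2 := by exact_mod_cast hn
  have hdpos : 0 < d := by nlinarith
  have hs2 : s ^ 2 = d := Real.sq_sqrt hdpos.le
  have hs0 : 0 ≤ s := Real.sqrt_nonneg d
  set β : ℝ := ((n : ℝ) + s) / 2 with hβ
  have hβpos : 0 < β := by rw [hβ]; linarith
  have hβeq : β ^ 2 - n * β + m = 0 := by rw [hβ]; nlinarith
  set bq : ℝ := β ^ (((q : ℕ) : ℝ)⁻¹ : ℝ) with hbq_def
  have hbq : bq ^ q = β := Real.rpow_inv_natCast_pow hβpos.le (by omega)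
  have hmin := minpoly_eq_aux n m hm hn hpow q hq
  have hint : IsIntegral ℚ bq := ⟨_, gq_monic (n : ℚ) (m : ℚ) q hq, by
    rw [← aeval_def]; exact aeval_gq_rat n m hbq hβeq⟩
  have hirrQ : Irreducible (X ^ (2 * q) - C (n : ℚ) * X ^ q + C (m : ℚ) : ℚ[X]) := by
    rw [← hmin]
    exact minpoly.irreducible hint
  have hmonic : (X ^ (2 * q) - C n * X ^ q + C m : ℤ[X]).Monic := gq_monic n m q hq
  rw [hmonic.irreducible_iff_irreducible_map_fraction_map (K := ℚ)]
  have hmap : (X ^ (2 * q) - C n * X ^ q + C m : ℤ[X]).map (algebraMap ℤ ℚ)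
      = X ^ (2 * q) - C (n : ℚ) * X ^ q + C (m : ℚ) := by
    simp [Polynomial.map_sub, Polynomial.map_add, Polynomial.map_pow, Polynomial.map_mul]
  rw [hmap]
  exact hirrQ
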